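/- Let U ⊆ ℂ be open and let ψ be holomorphic on U with nowhere vanishing derivative ψ'. Define D : U × ℂ → ℂ by D(z,y) = Real.log(|ψ'(z)|²), and define gₙ : U → ℂ recursively by g₁ = ψ''/ψ' and g_{n+1} = deriv gₙ. Then for every n ≥ 1 and every (z,y) ∈ U × ℂ, the n-fold application of the operator X to D satisfies (Xⁿ D)(z,y) = yⁿ · gₙ(z). (This is the explicit action formula δₙ(fU*_ψ) = yⁿ∂ⁿ_z(log ψ') fU*_ψ for the operators δₙ = [X,…[X,D]…].) -/

import Mathlib

/-- First-variable Wirtinger derivative ∂₁F(p) = ½(DF(p)(e₁) − i·DF(p)(i·e₁)) for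
F : ℂ × ℂ → ℂ, where DF(p) is the real Fréchet derivative of F at p. -/
noncomputable def wirt1 (F : ℂ × ℂ → ℂ) (p : ℂ × ℂ) : ℂ :=
  (1 / 2 : ℂ) * (fderiv ℝ F p (1, 0) - Complex.I * fderiv ℝ F p (Complex.I, 0))

/-- The operator (X F)(z,y) = y·∂₁F(z,y). -/
noncomputable def Xop (F : ℂ × ℂ → ℂ) : ℂ × ℂ → ℂ := fun p => p.2 * wirt1 F p

lemma wirt1_of_cdiff {F : ℂ × ℂ → ℂ} {p : ℂ × ℂ} (h : DifferentiableAt ℂ F p) :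
    wirt1 F p = fderiv ℂ F p (1, 0) := by
  have h2 := (h.hasFDerivAt.restrictScalars ℝ).fderiv
  unfold wirt1
  rw [h2]
  have hI : ((Complex.I, 0) : ℂ × ℂ) = Complex.I • ((1 : ℂ), (0 : ℂ)) := by simp
  rw [hI]
  simp only [ContinuousLinearMap.coe_restrictScalars', map_smul, smul_eq_mul]
  have : Complex.I * (Complex.I * fderiv ℂ F p (1, 0)) = - fderiv ℂ F p (1, 0) := by
    rw [← mul_assoc, Complex.I_mul_I]; ring
  rw [this]; ring

lemma wirt1_pow_mul {g : ℂ → ℂ} {z : ℂ} (y : ℂ) (n : ℕ) (hg : DifferentiableAt ℂ g z) :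
    wirt1 (fun p : ℂ × ℂ => p.2 ^ n * g p.1) (z, y) = y ^ n * deriv g z := by
  have hd : DifferentiableAt ℂ (fun p : ℂ × ℂ => p.2 ^ n * g p.1) (z, y) :=
    (differentiableAt_snd.pow n).mul (hg.comp _ differentiableAt_fst)
  rw [wirt1_of_cdiff hd]
  have hγ : HasDerivAt (fun t : ℂ => ((z + t, y) : ℂ × ℂ)) ((1 : ℂ), (0 : ℂ)) 0 := by
    have h1 : HasDerivAt (fun t : ℂ => z + t) 1 0 := (hasDerivAt_id 0).const_add z
    exact h1.prodMk (hasDerivAt_const 0 y)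
  have hd' : HasFDerivAt (fun p : ℂ × ℂ => p.2 ^ n * g p.1)
      (fderiv ℂ (fun p : ℂ × ℂ => p.2 ^ n * g p.1) (z, y)) (z + 0, y) := by
    simpa using hd.hasFDerivAt
  have h1 : HasDerivAt ((fun p : ℂ × ℂ => p.2 ^ n * g p.1) ∘ fun t : ℂ => (z + t, y))
      (fderiv ℂ (fun p : ℂ × ℂ => p.2 ^ n * g p.1) (z, y) (1, 0)) 0 := by
    have := hd'.comp_hasDerivAt 0 hγ
    simpa using this
  have h2 : HasDerivAt (fun t : ℂ => y ^ n * g (z + t)) (y ^ n * deriv g z) 0 := by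
    have hcur : HasDerivAt (fun t : ℂ => z + t) 1 0 := (hasDerivAt_id 0).const_add z
    have hgd : HasDerivAt g (deriv g z) ((fun t : ℂ => z + t) 0) := by
      simpa using hg.hasDerivAt
    have := hgd.comp 0 hcur
    simpa using this.const_mul (y ^ n)
  have h1' : HasDerivAt (fun t : ℂ => y ^ n * g (z + t))
      (fderiv ℂ (fun p : ℂ × ℂ => p.2 ^ n * g p.1) (z, y) (1, 0)) 0 := by
    convert h1 using 1
    rfl
  exact h1'.unique h2

lemma wirt1_base {f : ℂ → ℂ} {z : ℂ} {c : ℂ} (hc : HasDerivAt f c z) (hz : f z ≠ 0) (y : ℂ) :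
    wirt1 (fun p : ℂ × ℂ => ((Real.log (‖f p.1‖ ^ 2) : ℝ) : ℂ)) (z, y) = c / f z := by
  have hf1 : HasFDerivAt f
      ((ContinuousLinearMap.smulRight (1 : ℂ →L[ℂ] ℂ) c).restrictScalars ℝ) z :=
    hc.hasFDerivAt.restrictScalars ℝ
  have hns := hf1.norm_sq
  have ht : ‖f z‖ ^ 2 ≠ 0 := pow_ne_zero _ (norm_ne_zero_iff.mpr hz)
  have hlog := (Real.hasDerivAt_log ht).comp_hasFDerivAt z hns
  have hφ := Complex.ofRealCLM.hasFDerivAt.comp z hlog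
  have hF := hφ.comp (z, y) (hasFDerivAt_fst (𝕜 := ℝ) (p := ((z, y) : ℂ × ℂ)))
  have hfun : (fun p : ℂ × ℂ => ((Real.log (‖f p.1‖ ^ 2) : ℝ) : ℂ))
      = (Complex.ofRealCLM ∘ (Real.log ∘ fun w => ‖f w‖ ^ 2)) ∘ Prod.fst := by
    funext p; simp [Function.comp]
  unfold wirt1
  rw [hfun, hF.fderiv]
  simp only [ContinuousLinearMap.coe_comp', Function.comp_apply,
    ContinuousLinearMap.coe_fst', ContinuousLinearMap.coe_smul',
    Pi.smul_apply, Complex.ofRealCLM_apply, ContinuousLinearMap.smul_apply,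
    ContinuousLinearMap.coe_restrictScalars', ContinuousLinearMap.smulRight_apply,
    ContinuousLinearMap.one_apply, innerSL_apply_apply, smul_eq_mul]
  rw [Complex.inner, Complex.inner]
  have hnsq : ‖f z‖ ^ 2 = Complex.normSq (f z) := by
    rw [Complex.sq_norm]
  rw [hnsq]
  have h0 : Complex.normSq (f z) ≠ 0 := (Complex.normSq_pos.mpr hz).ne' 
  have hrw : c / f z = (c * (starRingEnd ℂ) (f z)) / (Complex.normSq (f z) : ℂ) := by
    rw [div_eq_div_iff hz (by exact_mod_cast h0)]
    rw [mul_assoc, mul_comm ((starRingEnd ℂ) (f z)) (f z), Complex.mul_conj]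
  rw [hrw]
  have h0' : (f z).re ^ 2 + (f z).im ^ 2 ≠ 0 := by
    simpa [Complex.normSq_apply, sq] using h0
  have hpos : (0:ℝ) < (f z).re ^ 2 + (f z).im ^ 2 :=
    lt_of_le_of_ne (by positivity) (Ne.symm h0')
  have hs : (f z).re * (f z).re + (f z).im * (f z).im ≠ 0 := by nlinarith
  apply Complex.ext
  · simp [Complex.normSq_apply, Complex.div_re, Complex.div_im,
      Complex.mul_re, Complex.mul_im, smul_eq_mul]
    field_simp
  · simp [Complex.normSq_apply, Complex.div_re, Complex.div_im,
      Complex.mul_re, Complex.mul_im, smul_eq_mul]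
    field_simp
    ring

lemma iter_deriv_analytic {U : Set ℂ} {g : ℂ → ℂ} (hg : AnalyticOnNhd ℂ g U) :
    ∀ k : ℕ, AnalyticOnNhd ℂ (deriv^[k] g) U := by
  intro k
  induction k with
  | zero => simpa using hg
  | succ k ih => rw [Function.iterate_succ_apply']; exact ih.deriv

/-- Let ψ be holomorphic on the open set U with nowhere vanishing derivative, let
D(z,y) = Real.log(|ψ'(z)|²) and gₙ = deriv^[n-1] (ψ''/ψ').  Then for n ≥ 1 and
(z,y) ∈ U × ℂ one has (Xⁿ D)(z,y) = yⁿ·gₙ(z). -/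
theorem stmt1 (U : Set ℂ) (hU : IsOpen U) (ψ : ℂ → ℂ)
    (hψ : DifferentiableOn ℂ ψ U) (hne : ∀ z ∈ U, deriv ψ z ≠ 0) :
    ∀ n : ℕ, 1 ≤ n → ∀ z ∈ U, ∀ y : ℂ,
      (Xop^[n] fun p : ℂ × ℂ => (Real.log (‖deriv ψ p.1‖ ^ 2) : ℂ)) (z, y)
        = y ^ n * (deriv^[n - 1] fun w => deriv (deriv ψ) w / deriv ψ w) z := by
  set D : ℂ × ℂ → ℂ :=
    fun p : ℂ × ℂ => (Real.log (‖deriv ψ p.1‖ ^ 2) : ℂ) with hD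
  set g0 : ℂ → ℂ := fun w => deriv (deriv ψ) w / deriv ψ w with hg0def
  have hA : AnalyticOnNhd ℂ ψ U := hψ.analyticOnNhd hU
  have hf : AnalyticOnNhd ℂ (deriv ψ) U := hA.deriv
  have hf' : AnalyticOnNhd ℂ (deriv (deriv ψ)) U := hf.deriv
  have hg0 : AnalyticOnNhd ℂ g0 U := hf'.div hf hne
  have hk : ∀ k : ℕ, AnalyticOnNhd ℂ (deriv^[k] g0) U := iter_deriv_analytic hg0
  have key : ∀ m : ℕ, ∀ z ∈ U, ∀ y : ℂ,
      (Xop^[m + 1] D) (z, y) = y ^ (m + 1) * (deriv^[m] g0) z := by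
    intro m
    induction m with
    | zero =>
      intro z hz y
      have hc : HasDerivAt (deriv ψ) (deriv (deriv ψ) z) z :=
        ((hf z hz).differentiableAt).hasDerivAt
      have hb := wirt1_base hc (hne z hz) y
      have h1 : Xop^[0 + 1] D (z, y) = y * wirt1 D (z, y) := by
        rw [zero_add, Function.iterate_one]; rfl
      rw [h1, hD, hb]
      simp [hg0def]
    | succ m ih =>
      intro z hz y
      rw [Function.iterate_succ_apply']
      have hev : (Xop^[m + 1] D) =ᶠ[nhds ((z, y) : ℂ × ℂ)]
          fun p : ℂ × ℂ => p.2 ^ (m + 1) * (deriv^[m] g0) p.1 := by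
        apply Filter.eventuallyEq_of_mem ((hU.prod isOpen_univ).mem_nhds ⟨hz, trivial⟩)
        rintro ⟨w, v⟩ ⟨hw, -⟩
        exact ih w hw v
      have hw1 : wirt1 (Xop^[m + 1] D) (z, y)
          = wirt1 (fun p : ℂ × ℂ => p.2 ^ (m + 1) * (deriv^[m] g0) p.1) (z, y) := by
        unfold wirt1
        rw [hev.fderiv_eq]
      have h2 := wirt1_pow_mul (g := deriv^[m] g0) y (m + 1)
        ((hk m z hz).differentiableAt)
      show (z, y).2 * wirt1 (Xop^[m + 1] D) (z, y) = _
      rw [hw1, h2, Function.iterate_succ_apply']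
      ring
  intro n hn z hz y
  obtain ⟨m, rfl⟩ := Nat.exists_eq_add_of_le hn
  have := key m z hz y
  simpa [Nat.add_comm 1 m] using this
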